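/- First eigenvalue vanishing criterion: for a finite weighted graph G with signature s : E^{or} → U(1), λ₁(Δ_μ^s) = 0 if and only if G has a connected component on which s is balanced, i.e., the restriction of s to that component is switching equivalent to the trivial signature. -/
import Mathlib


open Finset

/-- Rayleigh quotient of `f` for the magnetic Laplacian with weights `w`,
vertex measure `μ` and signature `s` (each unordered edge counted once). -/
noncomputable def rayleigh {V : Type*} [Fintype V] (G : SimpleGraph V) [DecidableRel G.Adj]
    (w : V → V → ℝ) (μ : V → ℝ) (s : V → V → ℂ) (f : V → ℂ) : ℝ :=
  ((1 / 2) * ∑ u : V, ∑ v : V, if G.Adj u v then w u v * ‖f u - s u v * f v‖ ^ 2 else 0) /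
    (∑ u : V, ‖f u‖ ^ 2 * μ u)

/-- The first eigenvalue of the magnetic Laplacian, characterized by the
variational (min-max) principle as the infimum of Rayleigh quotients. -/
noncomputable def lam1 {V : Type*} [Fintype V] (G : SimpleGraph V) [DecidableRel G.Adj]
    (w : V → V → ℝ) (μ : V → ℝ) (s : V → V → ℂ) : ℝ :=
  sInf { x : ℝ | ∃ f : V → ℂ, f ≠ 0 ∧ x = rayleigh G w μ s f }

/-- Frustration index of `V1` with `U(1)`-valued switching functions. -/
noncomputable def frusIdx {V : Type*} [Fintype V] (G : SimpleGraph V) [DecidableRel G.Adj]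
    (w : V → V → ℝ) (s : V → V → ℂ) (V1 : Finset V) : ℝ :=
  sInf { x : ℝ | ∃ τ : V → ℂ, (∀ u, ‖τ u‖ = 1) ∧
    x = (1 / 2) * ∑ u ∈ V1, ∑ v ∈ V1, if G.Adj u v then w u v * ‖τ u - s u v * τ v‖ else 0 }

/-- Weighted boundary measure `|E(V1, V1ᶜ)|`. -/
noncomputable def bdry {V : Type*} [Fintype V] [DecidableEq V] (G : SimpleGraph V)
    [DecidableRel G.Adj] (w : V → V → ℝ) (V1 : Finset V) : ℝ :=
  ∑ u ∈ V1, ∑ v ∈ V1ᶜ, if G.Adj u v then w u v else 0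

/-- `μ`-volume of `V1`. -/
noncomputable def vol {V : Type*} [Fintype V] (μ : V → ℝ) (V1 : Finset V) : ℝ :=
  ∑ u ∈ V1, μ u

/-- The Cheeger constant `h₁ˢ(μ)`. -/
noncomputable def cheeger1 {V : Type*} [Fintype V] [DecidableEq V] (G : SimpleGraph V)
    [DecidableRel G.Adj] (w : V → V → ℝ) (μ : V → ℝ) (s : V → V → ℂ) : ℝ :=
  sInf { x : ℝ | ∃ V1 : Finset V, V1.Nonempty ∧
    x = (frusIdx G w s V1 + bdry G w V1) / vol μ V1 }

/-- Maximal `μ`-degree `d_μ`. -/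
noncomputable def dmu {V : Type*} [Fintype V] (G : SimpleGraph V) [DecidableRel G.Adj]
    (w : V → V → ℝ) (μ : V → ℝ) : ℝ :=
  ⨆ u : V, (∑ v : V, if G.Adj u v then w u v else 0) / μ u

section Helpers

variable {V : Type*} [Fintype V] (G : SimpleGraph V) [DecidableRel G.Adj]
  (w : V → V → ℝ) (μ : V → ℝ) (s : V → V → ℂ)

/-- Numerator of the Rayleigh quotient. -/
noncomputable def Rnum (f : V → ℂ) : ℝ :=
  (1 / 2) * ∑ u : V, ∑ v : V, if G.Adj u v then w u v * ‖f u - s u v * f v‖ ^ 2 else 0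

/-- Denominator of the Rayleigh quotient. -/
noncomputable def Rden (f : V → ℂ) : ℝ := ∑ u : V, ‖f u‖ ^ 2 * μ u

lemma rayleigh_eq (f : V → ℂ) :
    rayleigh G w μ s f = Rnum G w s f / Rden μ f := rfl

lemma Rnum_nonneg (hw : ∀ u v, G.Adj u v → 0 < w u v) (f : V → ℂ) :
    0 ≤ Rnum G w s f := by
  apply mul_nonneg (by norm_num)
  apply Finset.sum_nonneg; intro u _
  apply Finset.sum_nonneg; intro v _
  split
  · next h => exact mul_nonneg (hw u v h).le (by positivity)
  · exact le_rfl

lemma Rden_nonneg (hμ : ∀ u, 0 < μ u) (f : V → ℂ) : 0 ≤ Rden μ f :=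
  Finset.sum_nonneg fun u _ => mul_nonneg (by positivity) (hμ u).le

lemma Rden_pos (hμ : ∀ u, 0 < μ u) {f : V → ℂ} (hf : f ≠ 0) : 0 < Rden μ f := by
  obtain ⟨u₀, hu₀⟩ := Function.ne_iff.mp hf
  have h0 : (0:ℂ) = 0 := rfl
  apply Finset.sum_pos' (fun u _ => mul_nonneg (by positivity) (hμ u).le)
  refine ⟨u₀, Finset.mem_univ _, ?_⟩
  have : f u₀ ≠ 0 := hu₀
  have : 0 < ‖f u₀‖ := norm_pos_iff.mpr this
  exact mul_pos (by positivity) (hμ u₀)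

lemma rayleigh_nonneg (hw : ∀ u v, G.Adj u v → 0 < w u v) (hμ : ∀ u, 0 < μ u)
    (f : V → ℂ) : 0 ≤ rayleigh G w μ s f :=
  div_nonneg (Rnum_nonneg G w s hw f) (Rden_nonneg μ hμ f)

lemma Rnum_smul (f : V → ℂ) (t : ℝ) :
    Rnum G w s (fun u => (t:ℂ) * f u) = t ^ 2 * Rnum G w s f := by
  have key : ∀ u v : V,
      (if G.Adj u v then w u v * ‖(t:ℂ) * f u - s u v * ((t:ℂ) * f v)‖ ^ 2 else 0)
      = t ^ 2 * (if G.Adj u v then w u v * ‖f u - s u v * f v‖ ^ 2 else 0) := by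
    intro u v
    split
    · have h1 : (t:ℂ) * f u - s u v * ((t:ℂ) * f v) = (t:ℂ) * (f u - s u v * f v) := by ring
      rw [h1, norm_mul, Complex.norm_real, mul_pow, Real.norm_eq_abs, sq_abs]
      ring
    · simp
  unfold Rnum
  simp only [key, ← Finset.mul_sum]
  ring

lemma Rden_smul (f : V → ℂ) (t : ℝ) :
    Rden μ (fun u => (t:ℂ) * f u) = t ^ 2 * Rden μ f := by
  unfold Rden
  rw [Finset.mul_sum]
  apply Finset.sum_congr rfl; intro u _
  rw [norm_mul, Complex.norm_real, mul_pow, Real.norm_eq_abs, sq_abs]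
  ring

lemma rayleigh_smul (f : V → ℂ) {t : ℝ} (ht : t ≠ 0) :
    rayleigh G w μ s (fun u => (t:ℂ) * f u) = rayleigh G w μ s f := by
  rw [rayleigh_eq, rayleigh_eq, Rnum_smul, Rden_smul,
    mul_div_mul_left _ _ (pow_ne_zero 2 ht)]

lemma continuous_Rnum : Continuous (fun f : V → ℂ => Rnum G w s f) := by
  unfold Rnum
  apply Continuous.mul continuous_const
  apply continuous_finset_sum; intro u _
  apply continuous_finset_sum; intro v _
  by_cases h : G.Adj u v
  · simp only [if_pos h]; fun_prop
  · simp only [if_neg h]; exact continuous_const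

lemma continuous_Rden : Continuous (fun f : V → ℂ => Rden μ f) := by
  unfold Rden
  apply continuous_finset_sum; intro u _
  fun_prop

end Helpers

theorem stmt_13 {V : Type*} [Fintype V] [Nonempty V] (G : SimpleGraph V) [DecidableRel G.Adj]
    (w : V → V → ℝ) (μ : V → ℝ) (s : V → V → ℂ)
    (hw_sym : ∀ u v, w u v = w v u)
    (hw_pos : ∀ u v, G.Adj u v → 0 < w u v)
    (hμ : ∀ u, 0 < μ u)
    (hs_unit : ∀ u v, G.Adj u v → ‖s u v‖ = 1)
    (hs_inv : ∀ u v, G.Adj u v → s v u = (s u v)⁻¹) :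
    lam1 G w μ s = 0 ↔
      ∃ c : G.ConnectedComponent, ∃ σ : V → ℂ, (∀ u, ‖σ u‖ = 1) ∧
        ∀ u v, G.Adj u v → G.connectedComponentMk u = c → s u v = σ u * (σ v)⁻¹ := by
  classical
  set A := { x : ℝ | ∃ f : V → ℂ, f ≠ 0 ∧ x = rayleigh G w μ s f } with hA
  have hAnonneg : ∀ x ∈ A, 0 ≤ x := by
    rintro x ⟨f, -, rfl⟩
    exact rayleigh_nonneg G w μ s hw_pos hμ f
  constructor
  · -- hard direction
    intro hlam
    -- the sphere
    set S : Set (V → ℂ) := {f | Rden μ f = 1} with hS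
    -- S is nonempty
    obtain ⟨u₀⟩ := ‹Nonempty V›
    have hSne : S.Nonempty := by
      refine ⟨fun u => if u = u₀ then (Real.sqrt (1 / μ u₀) : ℂ) else 0, ?_⟩
      show Rden μ _ = 1
      have key : ∀ u : V,
          ‖(if u = u₀ then ((Real.sqrt (1 / μ u₀) : ℝ) : ℂ) else 0)‖ ^ 2 * μ u
          = if u = u₀ then (1 / μ u₀) * μ u₀ else 0 := by
        intro u
        split
        · next h =>
          subst h
          rw [Complex.norm_real, Real.norm_eq_abs, abs_of_nonneg (Real.sqrt_nonneg _),
            Real.sq_sqrt (div_nonneg zero_le_one (hμ _).le)]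
        · simp
      unfold Rden
      simp only []
      rw [Finset.sum_congr rfl (fun u _ => key u), Finset.sum_ite_eq' Finset.univ u₀
        (fun _ => (1 / μ u₀) * μ u₀)]
      simp only [Finset.mem_univ, if_pos]
      rw [one_div, inv_mul_cancel₀ (hμ u₀).ne']
    -- S is compact
    have hSclosed : IsClosed S := isClosed_eq (continuous_Rden μ) continuous_const
    have hm : ∃ m : ℝ, 0 < m ∧ ∀ u, m ≤ μ u := by
      refine ⟨Finset.univ.inf' Finset.univ_nonempty μ, ?_, ?_⟩
      · obtain ⟨u, -, hu⟩ := Finset.exists_mem_eq_inf' Finset.univ_nonempty μ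
        rw [hu]; exact hμ u
      · intro u; exact Finset.inf'_le μ (Finset.mem_univ u)
    obtain ⟨m, hm0, hmle⟩ := hm
    have hSbd : Bornology.IsBounded S := by
      apply Bornology.IsBounded.subset (Metric.isBounded_closedBall (x := (0 : V → ℂ))
        (r := Real.sqrt (1 / m)))
      intro f hf
      rw [Metric.mem_closedBall, dist_zero_right]
      rw [pi_norm_le_iff_of_nonneg (Real.sqrt_nonneg _)]
      intro u
      have h1 : ‖f u‖ ^ 2 * μ u ≤ 1 := by
        have hRden : Rden μ f = 1 := hf
        unfold Rden at hRden
        calc ‖f u‖ ^ 2 * μ u ≤ ∑ v : V, ‖f v‖ ^ 2 * μ v :=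
              Finset.single_le_sum
                (f := fun v => ‖f v‖ ^ 2 * μ v)
                (fun v _ => mul_nonneg (by positivity) (hμ v).le)
                (Finset.mem_univ u)
          _ = 1 := hRden
      have h2 : ‖f u‖ ^ 2 ≤ 1 / m := by
        rw [le_div_iff₀ hm0]
        calc ‖f u‖ ^ 2 * m ≤ ‖f u‖ ^ 2 * μ u := by
              apply mul_le_mul_of_nonneg_left (hmle u) (by positivity)
          _ ≤ 1 := h1
      calc ‖f u‖ = Real.sqrt (‖f u‖ ^ 2) := by rw [Real.sqrt_sq (norm_nonneg _)]
        _ ≤ Real.sqrt (1 / m) := Real.sqrt_le_sqrt h2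
    have hScpt : IsCompact S := Metric.isCompact_of_isClosed_isBounded hSclosed hSbd
    -- minimizer
    obtain ⟨g, hgS, hgmin⟩ := hScpt.exists_isMinOn hSne (continuous_Rnum G w s).continuousOn
    have hgden : Rden μ g = 1 := hgS
    have hgne : g ≠ 0 := by
      intro h
      rw [h] at hgden
      simp [Rden] at hgden
    -- rayleigh g is the least element of A
    have hleast : IsLeast A (rayleigh G w μ s g) := by
      constructor
      · exact ⟨g, hgne, rfl⟩
      · rintro x ⟨f, hf, rfl⟩
        have hd : 0 < Rden μ f := Rden_pos μ hμ hf
        set t : ℝ := (Real.sqrt (Rden μ f))⁻¹ with ht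
        have ht0 : t ≠ 0 := by positivity
        have hmem : (fun u => (t:ℂ) * f u) ∈ S := by
          show Rden μ _ = 1
          rw [Rden_smul, ht, ← Real.sqrt_inv, Real.sq_sqrt (by positivity),
            inv_mul_cancel₀ hd.ne']
        have hle := hgmin hmem
        have e1 : rayleigh G w μ s g = Rnum G w s g := by
          rw [rayleigh_eq, hgden, div_one]
        have e2 : rayleigh G w μ s (fun u => (t:ℂ) * f u)
            = Rnum G w s (fun u => (t:ℂ) * f u) := by
          rw [rayleigh_eq, hmem, div_one]
        calc rayleigh G w μ s g = Rnum G w s g := e1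
          _ ≤ Rnum G w s (fun u => (t:ℂ) * f u) := hle
          _ = rayleigh G w μ s (fun u => (t:ℂ) * f u) := e2.symm
          _ = rayleigh G w μ s f := rayleigh_smul G w μ s f ht0
    have hray0 : rayleigh G w μ s g = 0 := by
      have hlamA : lam1 G w μ s = sInf A := rfl
      rw [← hleast.csInf_eq, ← hlamA]; exact hlam
    have hnum0 : Rnum G w s g = 0 := by
      rw [rayleigh_eq, hgden, div_one] at hray0
      exact hray0
    -- every edge term vanishes
    have hedge : ∀ u v, G.Adj u v → g u = s u v * g v := by
      have hsum : ∑ u : V, ∑ v : V,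
          (if G.Adj u v then w u v * ‖g u - s u v * g v‖ ^ 2 else 0) = 0 := by
        unfold Rnum at hnum0
        linarith
      intro u v huv
      have hnn : ∀ u ∈ Finset.univ (α := V), 0 ≤ ∑ v : V,
          (if G.Adj u v then w u v * ‖g u - s u v * g v‖ ^ 2 else 0) := by
        intro u _
        apply Finset.sum_nonneg; intro v _
        split
        · next h => exact mul_nonneg (hw_pos u v h).le (by positivity)
        · exact le_rfl
      have h1 := (Finset.sum_eq_zero_iff_of_nonneg hnn).mp hsum u (Finset.mem_univ u)
      have hnn2 : ∀ v ∈ Finset.univ (α := V),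
          0 ≤ (if G.Adj u v then w u v * ‖g u - s u v * g v‖ ^ 2 else 0) := by
        intro v _
        split
        · next h => exact mul_nonneg (hw_pos u v h).le (by positivity)
        · exact le_rfl
      have h2 := (Finset.sum_eq_zero_iff_of_nonneg hnn2).mp h1 v (Finset.mem_univ v)
      rw [if_pos huv] at h2
      have h3 : ‖g u - s u v * g v‖ ^ 2 = 0 := by
        rcases mul_eq_zero.mp h2 with h | h
        · exact absurd h (hw_pos u v huv).ne'
        · exact h
      have h4 : g u - s u v * g v = 0 := by
        rwa [pow_eq_zero_iff two_ne_zero, norm_eq_zero] at h3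
      exact sub_eq_zero.mp h4
    -- the component of a nonvanishing vertex is balanced
    obtain ⟨v₀, hgv₀⟩ := Function.ne_iff.mp hgne
    have hreach : ∀ a b : V, G.Reachable a b → ‖g a‖ = ‖g b‖ := by
      intro a b hr
      obtain ⟨p⟩ := hr
      induction p with
      | nil => rfl
      | cons h q ih =>
        rw [hedge _ _ h, norm_mul, hs_unit _ _ h, one_mul]
        exact ih
    have hg0 : ‖g v₀‖ ≠ 0 := norm_ne_zero_iff.mpr hgv₀
    set c := G.connectedComponentMk v₀ with hc
    have hnorm : ∀ u : V, G.connectedComponentMk u = c → ‖g u‖ = ‖g v₀‖ := by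
      intro u hu
      exact hreach u v₀ (SimpleGraph.ConnectedComponent.eq.mp hu)
    refine ⟨c, fun u => if G.connectedComponentMk u = c then g u / (‖g v₀‖ : ℂ) else 1,
      ?_, ?_⟩
    · intro u
      by_cases h : G.connectedComponentMk u = c
      · simp only [if_pos h]
        rw [norm_div, Complex.norm_real, Real.norm_eq_abs, abs_of_nonneg (norm_nonneg _),
          hnorm u h, div_self hg0]
      · simp [if_neg h]
    · intro u v huv hu
      have hv : G.connectedComponentMk v = c :=
        (SimpleGraph.ConnectedComponent.sound huv.symm.reachable).trans hu
      simp only [if_pos hu, if_pos hv]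
      have hgv : g v ≠ 0 := by
        intro h
        apply hg0
        rw [← hnorm v hv, h, norm_zero]
      have hr0 : ((‖g v₀‖ : ℝ) : ℂ) ≠ 0 := Complex.ofReal_ne_zero.mpr hg0
      rw [hedge u v huv]
      rw [inv_div, div_mul_div_comm, mul_comm (s u v * g v) ((‖g v₀‖ : ℝ) : ℂ),
        mul_div_mul_left _ _ hr0, mul_div_assoc, div_self hgv, mul_one]
  · -- easy direction
    rintro ⟨c, σ, hσ1, hσ⟩
    obtain ⟨u₀, hu₀⟩ := c.exists_rep
    set f : V → ℂ := fun u => if G.connectedComponentMk u = c then σ u else 0 with hf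
    have hfne : f ≠ 0 := by
      intro h
      have h0' : G.connectedComponentMk u₀ = c → σ u₀ = 0 := by
        simpa [hf] using congrFun h u₀
      have h0 := h0' hu₀
      have h1 := hσ1 u₀
      rw [h0, norm_zero] at h1
      exact zero_ne_one h1
    have hray : rayleigh G w μ s f = 0 := by
      rw [rayleigh_eq]
      have : Rnum G w s f = 0 := by
        unfold Rnum
        rw [mul_eq_zero]; right
        apply Finset.sum_eq_zero; intro u _
        apply Finset.sum_eq_zero; intro v _
        split
        · next huv =>
          have hfuv : f u = s u v * f v := by
            by_cases hc : G.connectedComponentMk u = c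
            · have hvc : G.connectedComponentMk v = c := by
                rw [← hc]
                exact (SimpleGraph.ConnectedComponent.sound huv.symm.reachable)
              rw [hf]
              simp only [if_pos hc, if_pos hvc]
              rw [hσ u v huv hc]
              have hσv : σ v ≠ 0 := by
                intro h; have := hσ1 v; rw [h] at this; simp at this
              field_simp
            · have hvc : ¬ G.connectedComponentMk v = c := by
                intro h
                apply hc
                rw [← h]
                exact SimpleGraph.ConnectedComponent.sound huv.reachable
              rw [hf]; simp [if_neg hc, if_neg hvc]
          rw [hfuv]; simp
        · rfl
      rw [this, zero_div]
    have h0A : (0:ℝ) ∈ A := ⟨f, hfne, hray.symm⟩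
    have hbdd : BddBelow A := ⟨0, hAnonneg⟩
    exact le_antisymm (csInf_le hbdd h0A) (le_csInf ⟨0, h0A⟩ hAnonneg)
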